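/- Let R be a commutative Noetherian ring and x_1,...,x_d a regular R-sequence contained in the Jacobson radical of R. If x_1^{e_1}···x_d^{e_d} = x_1^{f_1}···x_d^{f_d} for non-negative integers e_i, f_i, then e_i = f_i for all i. -/

import Mathlib

open RingTheory.Sequence Submodule

theorem aux_mono {R : Type*} [CommRing R] [IsNoetherianRing R] {d : ℕ} (x : Fin d → R)
    (hreg : RingTheory.Sequence.IsRegular R (List.ofFn x))
    (hjac : ∀ i, x i ∈ Ideal.jacobson (⊥ : Ideal R))
    (e f : Fin d → ℕ) (j : Fin d) (hej : e j ≠ 0) (hf : ∀ i, i ≤ j → f i = 0)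
    (h : ∏ i, x i ^ e i = ∏ i, x i ^ f i) : False := by
  classical
  set l := List.ofFn x with hl
  set k := (j : ℕ) + 1 with hk
  have hw := hreg.toIsWeaklyRegular
  rw [← List.take_append_drop k l, isWeaklyRegular_append_iff] at hw
  set I : Submodule R R := Ideal.ofList (l.take k) • ⊤ with hI
  have hw2 : IsWeaklyRegular (R ⧸ I) (l.drop k) := hw.2
  have hjac' : ∀ r ∈ l.drop k, r ∈ (Module.annihilator R (R ⧸ I)).jacobson := by
    intro r hr
    obtain ⟨i, rfl⟩ := Set.mem_range.mp (List.mem_ofFn.mp (List.mem_of_mem_drop hr))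
    exact Ideal.jacobson_mono bot_le (hjac i)
  have hregM : ∀ r ∈ l.drop k, IsSMulRegular (R ⧸ I) r := by
    intro r hr
    have := hw2.of_perm_of_subset_jacobson_annihilator (List.perm_cons_erase hr) hjac'
    exact ((isWeaklyRegular_cons_iff _ _ _).mp this).1
  have hmem : ∀ i : Fin d, j < i → x i ∈ l.drop k := by
    intro i hi
    have hki : k ≤ (i : ℕ) := hi
    have hlen : (i : ℕ) - k < (l.drop k).length := by
      simp only [List.length_drop, hl, List.length_ofFn]
      omega
    have : (l.drop k)[(i : ℕ) - k] = x i := by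
      rw [List.getElem_drop]
      have : k + ((i : ℕ) - k) = (i : ℕ) := by omega
      simp only [this, hl, List.getElem_ofFn, Fin.eta]
    exact this ▸ List.getElem_mem hlen
  have hrf : IsSMulRegular (R ⧸ I) (∏ i, x i ^ f i) := by
    refine Finset.prod_induction _ _ (fun a b ha hb => ha.mul hb) (fun a b hab => by simpa using hab) ?_
    intro i _
    rcases Nat.eq_zero_or_pos (f i) with h0 | hpos
    · rw [h0, pow_zero]; exact fun a b hab => by simpa using hab
    · have hij : j < i := by
        by_contra hij
        exact absurd (hf i (le_of_not_gt hij)) hpos.ne'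
      exact (hregM _ (hmem i hij)).pow _
  have hxj : x j ∈ Ideal.ofList (l.take k) := by
    apply Ideal.subset_span
    show x j ∈ l.take k
    have hlen : (j : ℕ) < (l.take k).length := by
      simp only [List.length_take, hl, List.length_ofFn]
      omega
    have : (l.take k)[(j : ℕ)] = x j := by
      rw [List.getElem_take]
      simp [hl]
    exact this ▸ List.getElem_mem hlen
  have hdvd : x j ∣ ∏ i, x i ^ e i := by
    refine dvd_trans (dvd_pow_self (x j) hej) (Finset.dvd_prod_of_mem _ (Finset.mem_univ j))
  have hprod_mem : (∏ i, x i ^ e i) ∈ I := by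
    obtain ⟨c, hc⟩ := hdvd
    have : (∏ i, x i ^ e i) = (∏ i, x i ^ e i) • (1 : R) := by simp
    rw [this, hI]
    exact Submodule.smul_mem_smul (hc ▸ Ideal.mul_mem_right c _ hxj) mem_top
  have h1 : (∏ i, x i ^ f i) • (Submodule.Quotient.mk (1 : R) : R ⧸ I)
      = (∏ i, x i ^ f i) • (0 : R ⧸ I) := by
    rw [smul_zero, ← Submodule.Quotient.mk_smul, smul_eq_mul, mul_one, ← h,
      Submodule.Quotient.mk_eq_zero]
    exact hprod_mem
  have h2 := hrf h1
  rw [Submodule.Quotient.mk_eq_zero] at h2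
  have htop : (⊤ : Submodule R R) ≤ Ideal.ofList l • ⊤ := by
    intro a _
    have : a ∈ I := by
      have := Submodule.smul_mem I a h2
      rwa [smul_eq_mul, mul_one] at this
    refine Submodule.smul_mono_left ?_ this
    exact Ideal.span_mono (fun r hr => List.mem_of_mem_take hr)
  exact hreg.top_ne_smul (le_antisymm htop le_top)

theorem stmt_0 {R : Type*} [CommRing R] [IsNoetherianRing R] {d : ℕ} (x : Fin d → R)
    (hreg : RingTheory.Sequence.IsRegular R (List.ofFn x))
    (hjac : ∀ i, x i ∈ Ideal.jacobson (⊥ : Ideal R))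
    (e f : Fin d → ℕ) (h : ∏ i, x i ^ e i = ∏ i, x i ^ f i) : e = f := by
  classical
  have hxreg : ∀ i, IsSMulRegular R (x i) := by
    intro i
    have hmem : x i ∈ List.ofFn x := List.mem_ofFn.mpr ⟨i, rfl⟩
    have hjac' : ∀ r ∈ List.ofFn x, r ∈ (Module.annihilator R R).jacobson := by
      intro r hr
      obtain ⟨i, rfl⟩ := Set.mem_range.mp (List.mem_ofFn.mp hr)
      exact Ideal.jacobson_mono bot_le (hjac i)
    have := hreg.toIsWeaklyRegular.of_perm_of_subset_jacobson_annihilator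
      (List.perm_cons_erase hmem) hjac'
    exact ((isWeaklyRegular_cons_iff _ _ _).mp this).1
  have cancel : ∀ (g : Fin d → ℕ) (j : Fin d), g j ≠ 0 →
      ∏ i, x i ^ g i = x j * ∏ i, x i ^ Function.update g j (g j - 1) i := by
    intro g j hg
    rw [← Finset.mul_prod_erase Finset.univ (fun i => x i ^ g i) (Finset.mem_univ j),
        ← Finset.mul_prod_erase Finset.univ
          (fun i => x i ^ Function.update g j (g j - 1) i) (Finset.mem_univ j),
        Function.update_self, ← mul_assoc, ← pow_succ',
        Nat.sub_add_cancel (Nat.one_le_iff_ne_zero.mpr hg)]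
    congr 1
    refine Finset.prod_congr rfl fun i hi => ?_
    rw [Function.update_of_ne (Finset.ne_of_mem_erase hi)]
  have hsum : ∀ (g : Fin d → ℕ) (j : Fin d), g j ≠ 0 →
      (∑ i, Function.update g j (g j - 1) i) + 1 = ∑ i, g i := by
    intro g j hg
    have hcong : ∑ i ∈ Finset.univ.erase j, Function.update g j (g j - 1) i
        = ∑ i ∈ Finset.univ.erase j, g i :=
      Finset.sum_congr rfl fun i hi => by
        rw [Function.update_of_ne (Finset.ne_of_mem_erase hi)]
    rw [← Finset.add_sum_erase Finset.univ g (Finset.mem_univ j),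
        ← Finset.add_sum_erase Finset.univ
          (fun i => Function.update g j (g j - 1) i) (Finset.mem_univ j),
        Function.update_self, hcong]
    omega
  suffices H : ∀ n (e f : Fin d → ℕ), (∑ i, e i) + (∑ i, f i) = n →
      (∏ i, x i ^ e i = ∏ i, x i ^ f i) → e = f from H _ e f rfl h
  intro n
  induction n using Nat.strong_induction_on with
  | _ n ih =>
  intro e f hn h
  by_cases hS : ∀ i, e i = 0 ∧ f i = 0
  · funext i; rw [(hS i).1, (hS i).2]
  · have hne : (Finset.univ.filter (fun i => e i ≠ 0 ∨ f i ≠ 0)).Nonempty := by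
      rw [Finset.filter_nonempty_iff]
      push_neg at hS
      obtain ⟨i, hi⟩ := hS
      exact ⟨i, Finset.mem_univ i, by tauto⟩
    set j := (Finset.univ.filter (fun i => e i ≠ 0 ∨ f i ≠ 0)).min' hne with hj
    have hjmin : ∀ i, i < j → e i = 0 ∧ f i = 0 := by
      intro i hi
      by_contra hcon
      have : i ∈ Finset.univ.filter (fun i => e i ≠ 0 ∨ f i ≠ 0) := by
        simp only [Finset.mem_filter, Finset.mem_univ, true_and]; tauto
      exact absurd (Finset.min'_le _ _ this) (not_le.mpr hi)
    have hjS : e j ≠ 0 ∨ f j ≠ 0 := by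
      have := Finset.min'_mem _ hne
      rw [Finset.mem_filter] at this
      exact this.2
    have hej : e j ≠ 0 := by
      by_contra h0
      have hfj : f j ≠ 0 := by tauto
      exact aux_mono x hreg hjac f e j hfj
        (fun i hi => hi.lt_or_eq.elim (fun hlt => (hjmin i hlt).1) (fun heq => heq ▸ h0)) h.symm
    have hfj : f j ≠ 0 := by
      by_contra h0
      exact aux_mono x hreg hjac e f j hej
        (fun i hi => hi.lt_or_eq.elim (fun hlt => (hjmin i hlt).2) (fun heq => heq ▸ h0)) h
    have hsum1 := hsum e j hej
    have hsum2 := hsum f j hfj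
    have h' : ∏ i, x i ^ Function.update e j (e j - 1) i
        = ∏ i, x i ^ Function.update f j (f j - 1) i := by
      have h2 := h
      rw [cancel e j hej, cancel f j hfj] at h2
      exact hxreg j h2
    have hef' : Function.update e j (e j - 1) = Function.update f j (f j - 1) :=
      ih ((∑ i, Function.update e j (e j - 1) i) + ∑ i, Function.update f j (f j - 1) i)
        (by omega) _ _ rfl h'
    funext i
    by_cases hi : i = j
    · subst hi
      have h1 := congrFun hef' j
      simp only [Function.update_self] at h1
      omega
    · have h1 := congrFun hef' i
      rwa [Function.update_of_ne hi, Function.update_of_ne hi] at h1
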